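/- arXiv:1806.00107 — 2 statements merged into one kernel-verified Lean document; each statement's English description precedes it below -/
import Mathlib

section
/- The vacuum-plus-two-particle state ψ = (√3/2)Ω + (1/(2√2))(a†)²Ω is a unit vector, and for every ω > 0, L > 0 and θ ∈ ℝ, setting f = (2ωL³)^{-1/2} e^{iθ}, the normal-ordered single-mode energy-density operator T = ω²( -f²·a∘a - (conj f)²·a†∘a† + 2|f|²·a†∘a ) satisfies ⟨ψ, Tψ⟩ = (ω/(2L³))·(1 - (√6/2)·cos(2θ)). In particular, since √6/2 > 1, there exist values of θ (e.g. θ = 0) for which ⟨ψ, Tψ⟩ < 0, so this state violates the pointwise quantum null energy condition ⟨T⟩ ≥ 0. -/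
/-- The single-mode amplitude `f = (2ωL³)^{-1/2} e^{iθ}`. -/
noncomputable def modeAmp (ω L θ : ℝ) : ℂ :=
  (((2 * ω * L ^ 3 : ℝ) ^ (-(1 / 2 : ℝ)) : ℝ) : ℂ) * Complex.exp (θ * Complex.I)

/-- The normal-ordered single-mode energy-density operator
`T = ω²( -f²·a∘a - (conj f)²·a†∘a† + 2|f|²·a†∘a )`. -/
noncomputable def energyDensityOp {H : Type*} [NormedAddCommGroup H] [InnerProductSpace ℂ H]
    (a adj : H →ₗ[ℂ] H) (ω L θ : ℝ) : H →ₗ[ℂ] H :=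
  ((ω ^ 2 : ℝ) : ℂ) •
    ( -((modeAmp ω L θ) ^ 2) • (a ∘ₗ a)
      - ((starRingEnd ℂ) (modeAmp ω L θ)) ^ 2 • (adj ∘ₗ adj)
      + ((2 * ‖modeAmp ω L θ‖ ^ 2 : ℝ) : ℂ) • (adj ∘ₗ a))

/-- The vacuum-plus-two-particle state
`ψ = (√3/2)Ω + (1/(2√2))(a†)²Ω` is a unit vector, and for every `ω > 0`, `L > 0`, `θ ∈ ℝ`
the normal-ordered single-mode energy-density operator satisfies
`⟨ψ, Tψ⟩ = (ω/(2L³))(1 - (√6/2)cos(2θ))`; in particular there exist values of `θ` for which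
`⟨ψ, Tψ⟩ < 0`, so this state violates the pointwise quantum null energy condition `⟨T⟩ ≥ 0`. -/
theorem vacuum_plus_two_particles_violates_NEC
    (H : Type*) [NormedAddCommGroup H] [InnerProductSpace ℂ H]
    (a adj : H →ₗ[ℂ] H)
    (hAdj : ∀ x y : H, (inner ℂ (a x) y : ℂ) = (inner ℂ x (adj y) : ℂ))
    (hCCR : a ∘ₗ adj - adj ∘ₗ a = (LinearMap.id : H →ₗ[ℂ] H))
    (Ω : H) (hΩ : ‖Ω‖ = 1) (hvac : a Ω = 0)
    (ψ : H)
    (hψ : ψ = ((Real.sqrt 3 / 2 : ℝ) : ℂ) • Ω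
        + ((1 / (2 * Real.sqrt 2) : ℝ) : ℂ) • adj (adj Ω)) :
    ‖ψ‖ = 1
    ∧ (∀ ω L θ : ℝ, 0 < ω → 0 < L →
        (inner ℂ ψ (energyDensityOp a adj ω L θ ψ) : ℂ)
          = ((ω / (2 * L ^ 3) * (1 - Real.sqrt 6 / 2 * Real.cos (2 * θ)) : ℝ) : ℂ))
    ∧ (∀ ω L : ℝ, 0 < ω → 0 < L →
        ∃ θ : ℝ, (inner ℂ ψ (energyDensityOp a adj ω L θ ψ) : ℂ).re < 0) := by

  have hca : ∀ x : H, a (adj x) = x + adj (a x) := by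
    intro x
    have := DFunLike.congr_fun hCCR x
    simpa [LinearMap.sub_apply, LinearMap.comp_apply, sub_eq_iff_eq_add] using this
  have h1 : a (adj Ω) = Ω := by rw [hca, hvac, map_zero, add_zero]
  have h2 : a (adj (adj Ω)) = ((2:ℝ) : ℂ) • adj Ω := by
    rw [hca, h1]
    push_cast
    rw [two_smul]
  have iΩΩ : (inner ℂ Ω Ω : ℂ) = 1 := by
    rw [inner_self_eq_norm_sq_to_K, hΩ]; norm_num
  have iΩadj : ∀ x : H, (inner ℂ Ω (adj x) : ℂ) = 0 := by
    intro x; rw [← hAdj, hvac, inner_zero_left]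
  have iadjΩ : ∀ x : H, (inner ℂ (adj x) Ω : ℂ) = 0 := by
    intro x
    rw [← inner_conj_symm, iΩadj, map_zero]
  have iaa : (inner ℂ (adj Ω) (adj Ω) : ℂ) = 1 := by
    rw [← hAdj, h1, iΩΩ]
  have i22 : (inner ℂ (adj (adj Ω)) (adj (adj Ω)) : ℂ) = 2 := by
    rw [← hAdj, h2, inner_smul_left, iaa, Complex.conj_ofReal]
    norm_num
  have i24 : (inner ℂ (adj (adj Ω)) (adj (adj (adj (adj Ω)))) : ℂ) = 0 := by
    rw [← hAdj, h2, inner_smul_left, ← hAdj, h1, iΩadj]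
    simp
  have h3c : ((Real.sqrt 3 : ℝ) : ℂ) ^ 2 = 3 := by
    rw [← Complex.ofReal_pow, Real.sq_sqrt (by norm_num : (0:ℝ) ≤ 3)]; norm_num
  have h4c : ((Real.sqrt 2 : ℝ) : ℂ) ^ 2 = 2 := by
    rw [← Complex.ofReal_pow, Real.sq_sqrt (by norm_num : (0:ℝ) ≤ 2)]; norm_num
  have hnorm : ‖ψ‖ = 1 := by
    have hinner : (inner ℂ ψ ψ : ℂ) = 1 := by
      rw [hψ]
      simp only [inner_add_left, inner_add_right, inner_smul_left, inner_smul_right,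
        iΩΩ, iΩadj, iadjΩ, i22, Complex.conj_ofReal, mul_zero, mul_one, add_zero, zero_add]
      push_cast
      field_simp
      ring_nf
      rw [h3c, h4c]
      norm_num
    have hh := inner_self_eq_norm_sq_to_K (𝕜 := ℂ) ψ
    rw [hinner] at hh
    have hhr : ((‖ψ‖ ^ 2 : ℝ) : ℂ) = ((1 : ℝ) : ℂ) := by push_cast; exact hh.symm
    have h2' : ‖ψ‖ ^ 2 = 1 := Complex.ofReal_inj.mp hhr
    nlinarith [norm_nonneg ψ]
  have key : ∀ ω L θ : ℝ, 0 < ω → 0 < L →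
      (inner ℂ ψ (energyDensityOp a adj ω L θ ψ) : ℂ)
        = ((ω / (2 * L ^ 3) * (1 - Real.sqrt 6 / 2 * Real.cos (2 * θ)) : ℝ) : ℂ) := by
    intro ω L θ hω hL
    rw [hψ]
    simp only [energyDensityOp, LinearMap.smul_apply, LinearMap.add_apply, LinearMap.sub_apply,
      LinearMap.neg_apply, LinearMap.comp_apply, map_add, map_smul, hvac, h1, h2,
      smul_zero, map_zero, zero_add, add_zero, smul_smul,
      inner_add_left, inner_add_right, inner_smul_left, inner_smul_right,
      inner_sub_left, inner_sub_right, inner_neg_left, inner_neg_right,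
      iΩΩ, iΩadj, iadjΩ, i22, i24, Complex.conj_ofReal, mul_zero, mul_one, zero_add, add_zero,
      zero_sub, neg_mul, mul_neg, neg_neg, neg_zero, sub_zero, zero_mul]
    set sC : ℝ := ((2 * ω * L ^ 3 : ℝ) ^ (-(1 / 2 : ℝ)) : ℝ) with hsC
    have hbase : (0:ℝ) < 2 * ω * L ^ 3 := by positivity
    have hs2R : sC ^ 2 = (2 * ω * L ^ 3)⁻¹ := by
      rw [hsC, ← Real.rpow_natCast ((2 * ω * L ^ 3 : ℝ) ^ (-(1 / 2 : ℝ))) 2,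
        ← Real.rpow_mul hbase.le,
        show (-(1 / 2 : ℝ)) * ((2:ℕ):ℝ) = -1 by norm_num, Real.rpow_neg_one]
    have hconj : (starRingEnd ℂ) (modeAmp ω L θ) = (sC : ℂ) * Complex.exp (-(θ:ℂ) * Complex.I) := by
      rw [modeAmp, map_mul, Complex.conj_ofReal, ← Complex.exp_conj, map_mul,
        Complex.conj_ofReal, Complex.conj_I, mul_neg, neg_mul]
    have hf2 : modeAmp ω L θ ^ 2 = ((sC ^ 2 : ℝ) : ℂ) * Complex.exp (((2*θ:ℝ):ℂ) * Complex.I) := by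
      rw [modeAmp, ← hsC, mul_pow, ← Complex.exp_nat_mul]
      push_cast
      ring_nf
    have hfc2 : ((starRingEnd ℂ) (modeAmp ω L θ)) ^ 2
        = ((sC ^ 2 : ℝ) : ℂ) * Complex.exp (-((2*θ:ℝ):ℂ) * Complex.I) := by
      rw [hconj, mul_pow, ← Complex.exp_nat_mul]
      push_cast
      ring_nf
    have habsC : ‖modeAmp ω L θ‖ ^ 2 = sC ^ 2 := by
      rw [modeAmp, norm_mul, Complex.norm_real, Real.norm_eq_abs, Complex.norm_exp_ofReal_mul_I, mul_one,
        abs_of_nonneg (Real.rpow_nonneg hbase.le _)]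
    have hcos : Complex.exp (((2*θ:ℝ):ℂ) * Complex.I) + Complex.exp (-((2*θ:ℝ):ℂ) * Complex.I)
        = 2 * ((Real.cos (2*θ) : ℝ) : ℂ) := by
      rw [Complex.ofReal_cos, Complex.exp_mul_I, show (-((2*θ:ℝ):ℂ)) * Complex.I
        = (-((2*θ:ℝ):ℂ)) * Complex.I by ring, Complex.exp_mul_I, Complex.cos_neg, Complex.sin_neg]
      ring
    have hE' : Complex.exp (-((2*θ:ℝ):ℂ) * Complex.I)
        = 2 * ((Real.cos (2*θ) : ℝ) : ℂ) - Complex.exp (((2*θ:ℝ):ℂ) * Complex.I) := by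
      rw [← hcos]; ring
    rw [hf2, hfc2, habsC, hE']
    have h6c : ((Real.sqrt 6 : ℝ) : ℂ) = ((Real.sqrt 3 : ℝ) : ℂ) * ((Real.sqrt 2 : ℝ) : ℂ) := by
      rw [← Complex.ofReal_mul, ← Real.sqrt_mul (by norm_num : (0:ℝ) ≤ 3)]
      norm_num
    have hs2C : ((sC ^ 2 : ℝ) : ℂ) * (2 * (ω:ℂ) * (L:ℂ) ^ 3) = 1 := by
      rw [hs2R]
      push_cast
      rw [inv_mul_cancel₀]
      have := Complex.ofReal_ne_zero.mpr hbase.ne'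
      push_cast at this ⊢
      exact this
    push_cast
    push_cast at hs2C
    rw [h6c]
    have hLne : ((L:ℂ)) ^ 3 ≠ 0 := by exact_mod_cast pow_ne_zero 3 (ne_of_gt hL)
    have h2ne : ((Real.sqrt 2 : ℝ) : ℂ) ≠ 0 := by
      simpa using (Real.sqrt_ne_zero' .mpr (by norm_num : (0:ℝ) < 2))
    field_simp
    rw [eq_div_iff]
    · linear_combination
        ((ω : ℂ) * (4 - 2 * ((Real.sqrt 3 : ℝ) : ℂ) * ((Real.sqrt 2 : ℝ) : ℂ)
            * Complex.cos (2 * (θ : ℂ)))) * hs2C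
        - ((ω : ℂ) * (2 - ((Real.sqrt 3 : ℝ) : ℂ) * ((Real.sqrt 2 : ℝ) : ℂ)
            * Complex.cos (2 * (θ : ℂ)))) * h4c
    · exact hLne
  refine ⟨hnorm, key, ?_⟩
  intro ω L hω hL
  refine ⟨0, ?_⟩
  rw [key ω L 0 hω hL]
  rw [Complex.ofReal_re]
  have h6 : (2:ℝ) < Real.sqrt 6 := by
    rw [show (2:ℝ) = Real.sqrt 4 by rw [show (4:ℝ) = 2^2 by norm_num, Real.sqrt_sq (by norm_num)]]
    exact Real.sqrt_lt_sqrt (by norm_num) (by norm_num)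
  have hpos : (0:ℝ) < ω / (2 * L ^ 3) := by positivity
  have hneg : 1 - Real.sqrt 6 / 2 * Real.cos (2 * 0) < 0 := by
    rw [mul_zero, Real.cos_zero, mul_one]
    linarith
  exact mul_neg_of_pos_of_neg hpos hneg
end

section
/- Let b ∈ (0, ∞] and let θ : [0, b) → ℝ be differentiable with θ'(λ) ≤ -θ(λ)²/2 for all λ ∈ [0, b), and suppose θ(0) < 0. Then b ≤ -2/θ(0); i.e. the solution cannot be extended beyond affine parameter 2/|θ(0)| (the expansion diverges to -∞ in finite affine parameter). -/
/-- Let `b ∈ (0, ∞]` and let `θ : [0, b) → ℝ` be differentiable with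
`θ'(λ) ≤ -θ(λ)²/2` on `[0, b)`, and suppose `θ(0) < 0`.  Then `b ≤ -2/θ(0)`: the expansion
diverges to `-∞` within finite affine parameter `2/|θ(0)|` (caustic formation). -/
theorem focusing_caustic_formation (b : EReal) (hb : 0 < b)
    (θ dθ : ℝ → ℝ)
    (hdiff : ∀ l : ℝ, 0 ≤ l → (l : EReal) < b →
      HasDerivWithinAt θ (dθ l) {x : ℝ | 0 ≤ x ∧ (x : EReal) < b} l)
    (hineq : ∀ l : ℝ, 0 ≤ l → (l : EReal) < b → dθ l ≤ -θ l ^ 2 / 2)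
    (h0 : θ 0 < 0) :
    b ≤ ((-2 / θ 0 : ℝ) : EReal) := by
  set S : Set ℝ := {x : ℝ | 0 ≤ x ∧ (x : EReal) < b} with hS
  have h0S : (0 : ℝ) ∈ S := ⟨le_refl 0, by simpa using hb⟩
  have hconv : Convex ℝ S := by
    rw [convex_iff_ordConnected]
    constructor
    intro x hx y hy z hz
    exact ⟨le_trans hx.1 hz.1, lt_of_le_of_lt (by exact_mod_cast hz.2) hy.2⟩
  have hcont : ContinuousOn θ S := fun x hx => (hdiff x hx.1 hx.2).continuousWithinAt
  -- θ is antitone, hence θ l ≤ θ 0 < 0 on S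
  have hanti : AntitoneOn θ S := by
    apply antitoneOn_of_hasDerivWithinAt_nonpos hconv hcont
    · intro x hx
      exact ((hdiff x (interior_subset hx).1 (interior_subset hx).2).mono interior_subset)
    · intro x hx
      have := hineq x (interior_subset hx).1 (interior_subset hx).2
      nlinarith [sq_nonneg (θ x)]
  have hneg : ∀ l ∈ S, θ l < 0 := fun l hl =>
    lt_of_le_of_lt (hanti h0S hl hl.1) h0
  -- g l = (θ l)⁻¹ - l/2 is monotone on S
  have hmono : MonotoneOn (fun l => (θ l)⁻¹ - l / 2) S := by
    apply monotoneOn_of_hasDerivWithinAt_nonneg hconv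
      (f' := fun l => -dθ l / θ l ^ 2 - 1 / 2)
    · exact fun x hx => ((hcont x hx).inv₀ (hneg x hx).ne).sub
        ((continuous_id.div_const 2).continuousOn x hx)
    · intro x hx
      have hxS := interior_subset hx
      exact (((hdiff x hxS.1 hxS.2).inv (hneg x hxS).ne).sub
        ((hasDerivWithinAt_id x S).div_const 2)).mono interior_subset
    · intro x hx
      have hxS := interior_subset hx
      have h1 := hineq x hxS.1 hxS.2
      have h2 : (0:ℝ) < θ x ^ 2 := by nlinarith [hneg x hxS]
      rw [sub_nonneg, le_div_iff₀ h2]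
      linarith
  -- key claim: every l ∈ S satisfies l < -2/θ 0
  have key : ∀ l ∈ S, l < -2 / θ 0 := by
    intro l hl
    have hm := hmono h0S hl hl.1
    simp only at hm
    have hinv0 : (θ 0)⁻¹ < 0 := inv_lt_zero.mpr h0
    have hinvl : (θ l)⁻¹ < 0 := inv_lt_zero.mpr (hneg l hl)
    have h4 : (-2:ℝ) / θ 0 = -2 * (θ 0)⁻¹ := by rw [div_eq_mul_inv]
    rw [h4]
    linarith
  -- conclude
  by_contra hcon
  push_neg at hcon
  have hpos : (0:ℝ) < -2 / θ 0 := div_pos_iff.mpr (Or.inr ⟨by norm_num, h0⟩)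
  have hmem : (-2 / θ 0 : ℝ) ∈ S := ⟨hpos.le, hcon⟩
  exact absurd (key _ hmem) (lt_irrefl _)
end
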